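/- Let (Ω, ℱ, ℙ) be a probability space carrying, for each t = 1,…,T, random variables θ_t with values in {1,…,K}, (r_t, a_t) with values in [0,R_max] × [0,A_max]^d, and x_t with values in {0,1}, such that for every t and every θ with ℙ(θ_t = θ) > 0, the law of (r_t, a_t) under the conditional probability measure ℙ(· | θ_t = θ) equals D_θ. If ∑_{t=1}^T a_t x_t ≤ T·b componentwise almost surely, then E[∑_{t=1}^T r_t x_t] ≤ T · V^mix(b), where V^mix(b) := min_{p ∈ 𝒫} { ⟨p, b⟩ + max_θ g_θ(p) }. -/

import Mathlib

open MeasureTheory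

/-- Surplus function `g_θ(p) = E_{(r,a)∼D}[(r − ⟨p,a⟩)₊]`. -/
noncomputable def surplus {d : ℕ} (D : Measure (ℝ × (Fin d → ℝ))) (p : Fin d → ℝ) : ℝ :=
  ∫ z, max (z.1 - ∑ i, p i * z.2 i) 0 ∂D

/-- switching-aware oracle upper bound.  For any online policy (any random
variables `θ_t, (r_t, a_t), x_t` such that the conditional law of `(r_t,a_t)` given
`θ_t = θ` is `D_θ`) satisfying the pathwise budget constraint `∑_t a_t x_t ≤ T·b`,
`E[∑_t r_t x_t] ≤ T · V^mix(b)` where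
`V^mix(b) = min_{p ∈ 𝒫} (⟨p,b⟩ + max_θ g_θ(p))`. -/
theorem stmt3 (K T d : ℕ) (hK : 1 ≤ K) (hT : 1 ≤ T) (hd : 1 ≤ d)
    (Rmax Amax : ℝ) (hR : 0 < Rmax) (hA : 0 < Amax)
    (D : Fin K → Measure (ℝ × (Fin d → ℝ)))
    (hDp : ∀ θ, IsProbabilityMeasure (D θ))
    (hDs : ∀ θ, ∀ᵐ z ∂ D θ, 0 ≤ z.1 ∧ z.1 ≤ Rmax ∧ ∀ i, 0 ≤ z.2 i ∧ z.2 i ≤ Amax)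
    (b : Fin d → ℝ) (hb : ∀ i, 0 < b i)
    (bmin : ℝ) (hbmin : IsLeast (Set.range b) bmin)
    (Pmax : ℝ) (hP : 2 * Rmax / bmin ≤ Pmax)
    (Ω : Type*) [MeasurableSpace Ω] (μ : Measure Ω) [IsProbabilityMeasure μ]
    (θt : Fin T → Ω → Fin K) (hθmeas : ∀ t, Measurable (θt t))
    (r : Fin T → Ω → ℝ) (a : Fin T → Ω → Fin d → ℝ)
    (hrameas : ∀ t, Measurable (fun ω => (r t ω, a t ω)))
    (hrange : ∀ t ω, 0 ≤ r t ω ∧ r t ω ≤ Rmax ∧ ∀ i, 0 ≤ a t ω i ∧ a t ω i ≤ Amax)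
    (x : Fin T → Ω → ℝ) (hxmeas : ∀ t, Measurable (x t))
    (hx01 : ∀ t ω, x t ω = 0 ∨ x t ω = 1)
    (hlaw : ∀ t θ, μ {ω | θt t ω = θ} ≠ 0 →
      Measure.map (fun ω => (r t ω, a t ω)) (ProbabilityTheory.cond μ {ω | θt t ω = θ})
        = D θ)
    (hbudget : ∀ᵐ ω ∂μ, ∀ i, ∑ t, a t ω i * x t ω ≤ T * b i) :
    (∫ ω, ∑ t, r t ω * x t ω ∂μ)
      ≤ T * sInf ((fun p => (∑ i, p i * b i) + sSup (Set.range fun θ => surplus (D θ) p)) ''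
          {p : Fin d → ℝ | ∀ i, p i ∈ Set.Icc 0 Pmax}) := by
  classical
  have hbmin_pos : 0 < bmin := by
    obtain ⟨i, hi⟩ := hbmin.1
    rw [← hi]; exact hb i
  have hPmax : 0 ≤ Pmax := le_trans (le_of_lt (by positivity)) hP
  set F : (Fin d → ℝ) → ℝ :=
    fun p => (∑ i, p i * b i) + sSup (Set.range fun θ => surplus (D θ) p) with hF
  have hSne : ((fun p => (∑ i, p i * b i) + sSup (Set.range fun θ => surplus (D θ) p)) ''
      {p : Fin d → ℝ | ∀ i, p i ∈ Set.Icc 0 Pmax}).Nonempty :=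
    ⟨F 0, ⟨0, fun i => ⟨le_refl 0, hPmax⟩, rfl⟩⟩
  -- integrability of the reward sum
  have hrmeas : ∀ t, Measurable (r t) := fun t => (measurable_fst.comp (hrameas t))
  have hint_rx : Integrable (fun ω => ∑ t, r t ω * x t ω) μ := by
    apply integrable_finset_sum
    intro t _
    refine (integrable_const Rmax).mono' ((hrmeas t).mul (hxmeas t)).aestronglyMeasurable ?_
    refine Filter.Eventually.of_forall fun ω => ?_
    rcases hx01 t ω with h | h <;>
      simp [h, Real.norm_eq_abs, abs_of_nonneg (hrange t ω).1, hR.le, (hrange t ω).2.1]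
  -- the key bound for a fixed price vector p
  have key : ∀ p : Fin d → ℝ, (∀ i, p i ∈ Set.Icc 0 Pmax) →
      (∫ ω, ∑ t, r t ω * x t ω ∂μ) ≤ T * F p := by
    intro p hp
    have hp0 : ∀ i, 0 ≤ p i := fun i => (hp i).1
    set f : ℝ × (Fin d → ℝ) → ℝ := fun z => max (z.1 - ∑ i, p i * z.2 i) 0 with hf
    have hfc : Continuous f := by
      apply Continuous.max _ continuous_const
      exact continuous_fst.sub (continuous_finset_sum _ fun i _ =>
        (continuous_const.mul ((continuous_apply i).comp continuous_snd)))
    set M : ℝ := sSup (Set.range fun θ => surplus (D θ) p) with hM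
    have hMbdd : BddAbove (Set.range fun θ => surplus (D θ) p) := (Set.finite_range _).bddAbove
    have hsurplus_le : ∀ θ, surplus (D θ) p ≤ M := fun θ => le_csSup hMbdd ⟨θ, rfl⟩
    have hM0 : 0 ≤ M := by
      have h0 : (0:ℝ) ≤ surplus (D ⟨0, hK⟩) p :=
        integral_nonneg (fun z => le_max_right _ _)
      exact le_trans h0 (hsurplus_le _)
    have hmeasY : ∀ t, Measurable fun ω => f (r t ω, a t ω) :=
      fun t => hfc.measurable.comp (hrameas t)
    have hboundY : ∀ t ω, ‖f (r t ω, a t ω)‖ ≤ Rmax := by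
      intro t ω
      rw [Real.norm_eq_abs, abs_of_nonneg (le_max_right _ _)]
      apply max_le _ hR.le
      have h1 := (hrange t ω).2.1
      have hs : 0 ≤ ∑ i, p i * a t ω i :=
        Finset.sum_nonneg fun i _ => mul_nonneg (hp0 i) ((hrange t ω).2.2 i).1
      linarith
    have hintY : ∀ t, Integrable (fun ω => f (r t ω, a t ω)) μ := by
      intro t
      exact (integrable_const Rmax).mono' (hmeasY t).aestronglyMeasurable
        (Filter.Eventually.of_forall (hboundY t))
    -- expectation bound per round
    have hexp : ∀ t, (∫ ω, f (r t ω, a t ω) ∂μ) ≤ M := by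
      intro t
      set A : Fin K → Set Ω := fun θ => {ω | θt t ω = θ} with hA
      have hAmeas : ∀ θ, MeasurableSet (A θ) :=
        fun θ => (hθmeas t) (measurableSet_singleton θ)
      have hAdisj : Pairwise (Function.onFun Disjoint A) := by
        intro θ θ' hne
        refine Set.disjoint_left.2 fun ω h1 h2 => hne ?_
        rw [← h1, ← h2]
      have hAuniv : (⋃ θ, A θ) = Set.univ := by
        ext ω; simp [hA]
      have hdecomp : (∫ ω, f (r t ω, a t ω) ∂μ)
          = ∑ θ, ∫ ω in A θ, f (r t ω, a t ω) ∂μ := by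
        rw [← integral_iUnion_fintype hAmeas hAdisj (fun θ => (hintY t).integrableOn),
          hAuniv, Measure.restrict_univ]
      have hbound : ∀ θ, (∫ ω in A θ, f (r t ω, a t ω) ∂μ) ≤ (μ (A θ)).toReal * M := by
        intro θ
        by_cases h0 : μ (A θ) = 0
        · rw [Measure.restrict_eq_zero.2 h0, integral_zero_measure]
          exact mul_nonneg ENNReal.toReal_nonneg hM0
        · have hcondint : (∫ ω, f (r t ω, a t ω) ∂(ProbabilityTheory.cond μ (A θ)))
              = surplus (D θ) p := by
            have h2 := integral_map (μ := ProbabilityTheory.cond μ (A θ))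
              (φ := fun ω => (r t ω, a t ω)) (hrameas t).aemeasurable
              (f := f) hfc.aestronglyMeasurable
            rw [hlaw t θ h0] at h2
            exact h2.symm
          rw [ProbabilityTheory.cond, integral_smul_measure] at hcondint
          have hμfin : μ (A θ) ≠ ⊤ := measure_ne_top μ _
          have htoReal : ((μ (A θ))⁻¹).toReal = ((μ (A θ)).toReal)⁻¹ := by
            rw [ENNReal.toReal_inv]
          have hμpos : 0 < (μ (A θ)).toReal := ENNReal.toReal_pos h0 hμfin
          have heqi : (∫ ω in A θ, f (r t ω, a t ω) ∂μ)
              = (μ (A θ)).toReal * surplus (D θ) p := by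
            rw [← hcondint, htoReal, smul_eq_mul, ← mul_assoc,
              mul_inv_cancel₀ (ne_of_gt hμpos), one_mul]
          rw [heqi]
          exact mul_le_mul_of_nonneg_left (hsurplus_le θ) hμpos.le
      have hsum : ∑ θ, (μ (A θ)).toReal = 1 := by
        have h1 : ∑ θ, μ (A θ) = 1 := by
          rw [← measure_biUnion_finset (hAdisj.set_pairwise _) (fun θ _ => hAmeas θ)]
          simp only [Finset.mem_univ, Set.iUnion_true, hAuniv, measure_univ]
        have h2 := congrArg ENNReal.toReal h1
        rwa [ENNReal.toReal_sum (fun θ _ => measure_ne_top μ _), ENNReal.toReal_one] at h2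
      calc (∫ ω, f (r t ω, a t ω) ∂μ) = ∑ θ, ∫ ω in A θ, f (r t ω, a t ω) ∂μ := hdecomp
        _ ≤ ∑ θ, (μ (A θ)).toReal * M := Finset.sum_le_sum fun θ _ => hbound θ
        _ = (∑ θ, (μ (A θ)).toReal) * M := (Finset.sum_mul ..).symm
        _ = M := by rw [hsum, one_mul]
    -- pointwise inequality
    have hpt : ∀ᵐ ω ∂μ, ∑ t, r t ω * x t ω
        ≤ (∑ t, f (r t ω, a t ω)) + ∑ i, p i * (T * b i) := by
      filter_upwards [hbudget] with ω hbud
      have h1 : ∀ t, r t ω * x t ω ≤ f (r t ω, a t ω) + (∑ i, p i * a t ω i) * x t ω := by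
        intro t
        rcases hx01 t ω with h | h
        · simp only [h, mul_zero, add_zero]
          exact le_max_right _ _
        · have h2 := le_max_left (r t ω - ∑ i, p i * a t ω i) 0
          simp only [h, mul_one]
          show r t ω ≤ max (r t ω - ∑ i, p i * a t ω i) 0 + ∑ i, p i * a t ω i
          linarith
      have heq : ∑ t, (∑ i, p i * a t ω i) * x t ω
          = ∑ i, p i * ∑ t, a t ω i * x t ω := by
        simp_rw [Finset.sum_mul, Finset.mul_sum, mul_assoc]
        exact Finset.sum_comm
      have hle : ∑ i, p i * ∑ t, a t ω i * x t ω ≤ ∑ i, p i * (T * b i) :=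
        Finset.sum_le_sum fun i _ => mul_le_mul_of_nonneg_left (hbud i) (hp0 i)
      calc ∑ t, r t ω * x t ω
          ≤ ∑ t, (f (r t ω, a t ω) + (∑ i, p i * a t ω i) * x t ω) :=
            Finset.sum_le_sum fun t _ => h1 t
        _ = (∑ t, f (r t ω, a t ω)) + ∑ t, (∑ i, p i * a t ω i) * x t ω :=
            Finset.sum_add_distrib
        _ ≤ (∑ t, f (r t ω, a t ω)) + ∑ i, p i * (T * b i) := by
            rw [heq]; exact add_le_add_right hle _
    -- integrate
    have hintf : Integrable (fun ω => ∑ t, f (r t ω, a t ω)) μ :=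
      integrable_finset_sum _ fun t _ => hintY t
    have hineq : (∫ ω, ∑ t, r t ω * x t ω ∂μ)
        ≤ (∑ t : Fin T, ∫ ω, f (r t ω, a t ω) ∂μ) + ∑ i, p i * (T * b i) := by
      have h3 : (∫ ω, ((∑ t, f (r t ω, a t ω)) + ∑ i, p i * (T * b i)) ∂μ)
          = (∑ t : Fin T, ∫ ω, f (r t ω, a t ω) ∂μ) + ∑ i, p i * (T * b i) := by
        rw [integral_add hintf (integrable_const _),
          integral_finset_sum _ (fun t _ => hintY t), integral_const]
        simp
      rw [← h3]
      exact integral_mono_ae hint_rx (hintf.add (integrable_const _)) hpt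
    have hsum1 : ∑ t : Fin T, ∫ ω, f (r t ω, a t ω) ∂μ ≤ T * M := by
      calc ∑ t : Fin T, ∫ ω, f (r t ω, a t ω) ∂μ ≤ ∑ _t : Fin T, M :=
            Finset.sum_le_sum fun t _ => hexp t
        _ = T * M := by
            rw [Finset.sum_const, Finset.card_univ, Fintype.card_fin, nsmul_eq_mul]
    have hsum2 : ∑ i, p i * (T * b i) = T * ∑ i, p i * b i := by
      rw [Finset.mul_sum]; exact Finset.sum_congr rfl fun i _ => by ring
    have hFp : (T:ℝ) * F p = T * ∑ i, p i * b i + T * M := by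
      simp only [hF]; rw [← hM]; ring
    rw [hFp]
    rw [hsum2] at hineq
    linarith
  -- conclude
  have hT0 : (0:ℝ) < T := by exact_mod_cast hT
  have hlow : (∫ ω, ∑ t, r t ω * x t ω ∂μ) / T
      ≤ sInf ((fun p => (∑ i, p i * b i) + sSup (Set.range fun θ => surplus (D θ) p)) ''
          {p : Fin d → ℝ | ∀ i, p i ∈ Set.Icc 0 Pmax}) := by
    apply le_csInf hSne
    rintro y ⟨p, hp, rfl⟩
    rw [div_le_iff₀ hT0]
    calc (∫ ω, ∑ t, r t ω * x t ω ∂μ) ≤ T * F p := key p hp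
      _ = F p * T := mul_comm _ _
  have hfin := (div_le_iff₀ hT0).1 hlow
  linarith
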